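/- Let G be a finite simple connected graph with n ≥ 3 vertices. Then G induces a 4-periodic Grover walk if and only if the spectrum of its transition matrix T consists of the eigenvalue −1 with multiplicity 1, the eigenvalue 0 with multiplicity n − 2, and the eigenvalue 1 with multiplicity 1. -/

import Mathlib

open Matrix SimpleGraph

/-- The Grover transfer matrix `U = U(G)` of a finite simple graph `G`, a `2m × 2m`
complex matrix indexed by the darts (symmetric arcs) of `G`.  For darts `e, f`,
`U e f = 2/deg(t(f)) - 1` if `f = e⁻¹`, `U e f = 2/deg(t(f))` if `t(f) = o(e)` and
`f ≠ e⁻¹`, and `U e f = 0` otherwise. -/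
noncomputable def groverMatrix {V : Type*} [Fintype V] [DecidableEq V]
    (G : SimpleGraph V) [DecidableRel G.Adj] : Matrix G.Dart G.Dart ℂ :=
  fun e f =>
    if f = e.symm then 2 / (G.degree f.snd : ℂ) - 1
    else if f.snd = e.fst then 2 / (G.degree f.snd : ℂ)
    else 0

/-- `G` induces a `k`-periodic Grover walk: `U ^ k = 1` and `U ^ j ≠ 1` for `1 ≤ j < k`. -/
def InducesPeriodicGroverWalk {V : Type*} [Fintype V] [DecidableEq V]
    (G : SimpleGraph V) [DecidableRel G.Adj] (k : ℕ) : Prop :=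
  groverMatrix G ^ k = 1 ∧ ∀ j : ℕ, 1 ≤ j → j < k → groverMatrix G ^ j ≠ 1

/-- The transition matrix of the isotropic random walk on `G`:
`T u v = 1/deg(u)` if `u ∼ v` and `0` otherwise. -/
noncomputable def transitionMatrix {V : Type*} [Fintype V]
    (G : SimpleGraph V) [DecidableRel G.Adj] : Matrix V V ℝ :=
  fun u v => if G.Adj u v then 1 / (G.degree u : ℝ) else 0


set_option linter.unusedSectionVars false
set_option linter.unusedVariables false
set_option maxHeartbeats 1000000

open Polynomial Finset

namespace GroverAux

variable {V : Type*} [Fintype V] [DecidableEq V] (G : SimpleGraph V) [DecidableRel G.Adj]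

noncomputable def deg (u : V) : ℝ := (G.degree u : ℝ)

noncomputable def mA : Matrix G.Dart V ℝ := Matrix.of fun e u => if e.snd = u then 1 else 0
noncomputable def mB : Matrix G.Dart V ℝ := Matrix.of fun e u => if e.fst = u then 1 else 0
noncomputable def mS : Matrix G.Dart G.Dart ℝ := Matrix.of fun e f => if f = e.symm then 1 else 0
noncomputable def mE : Matrix V V ℝ := Matrix.diagonal fun u => (deg G u)⁻¹
noncomputable def mD : Matrix V V ℝ := Matrix.diagonal (deg G)
noncomputable def mM : Matrix V V ℝ := G.adjMatrix ℝ
noncomputable def mT : Matrix V V ℝ := mE G * mM G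
noncomputable def mP : Matrix G.Dart G.Dart ℝ := mA G * mE G * (mA G)ᵀ
noncomputable def mQ : Matrix G.Dart G.Dart ℝ := mB G * mE G * (mB G)ᵀ
noncomputable def mU : Matrix G.Dart G.Dart ℝ := mS G * (mP G + mP G - 1)

lemma dart_snd_fiber_card (u : V) :
    #(filter (fun e : G.Dart => e.snd = u) univ) = G.degree u := by
  rw [← G.dart_fst_fiber_card_eq_degree u]
  apply Finset.card_bij (fun e _ => e.symm)
  · intro e he; simp_all [Dart.symm]
  · intro a ha b hb h
    simpa using congrArg Dart.symm h
  · intro b hb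
    exact ⟨b.symm, by simp_all [Dart.symm], by simp⟩

lemma S_mul_apply {α : Type*} [Fintype α] (N : Matrix G.Dart α ℝ) (e : G.Dart) (x : α) :
    (mS G * N) e x = N e.symm x := by
  simp [mS, Matrix.mul_apply, ite_mul]

lemma S_mul_S : mS G * mS G = 1 := by
  ext e f
  rw [S_mul_apply]
  simp only [mS, Matrix.of_apply, Dart.symm_symm, Matrix.one_apply]
  by_cases h : e = f
  · simp [h]
  · rw [if_neg (fun hf => h hf.symm), if_neg h]

lemma S_mul_A : mS G * mA G = mB G := by
  ext e u; rw [S_mul_apply]; simp [mA, mB, Dart.symm]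

lemma S_mul_B : mS G * mB G = mA G := by
  ext e u; rw [S_mul_apply]; simp [mA, mB, Dart.symm]

lemma symm_eq_comm (e f : G.Dart) : (e = f.symm) ↔ (f = e.symm) :=
  ⟨fun h => by simp [h], fun h => by simp [h]⟩

lemma S_transpose : (mS G)ᵀ = mS G := by
  ext e f
  simp only [mS, transpose_apply, Matrix.of_apply]
  rw [if_congr (symm_eq_comm G e f) rfl rfl]

lemma At_A : (mA G)ᵀ * mA G = mD G := by
  ext u v
  simp only [Matrix.mul_apply, transpose_apply, mA, Matrix.of_apply, mD]
  rcases eq_or_ne u v with rfl | huv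
  · rw [diagonal_apply_eq]
    rw [Finset.sum_congr rfl (fun e _ => show _ = if e.snd = u then (1:ℝ) else 0 by split <;> simp_all)]
    rw [Finset.sum_boole, dart_snd_fiber_card]
    rfl
  · rw [diagonal_apply_ne _ huv]
    apply Finset.sum_eq_zero
    intro e _
    rcases eq_or_ne e.snd u with h | h <;> rcases eq_or_ne e.snd v with h2 | h2 <;>
      simp_all

lemma Bt_B : (mB G)ᵀ * mB G = mD G := by
  have h1 : mB G = mS G * mA G := (S_mul_A G).symm
  rw [h1, transpose_mul, S_transpose, Matrix.mul_assoc, ← Matrix.mul_assoc (mS G),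
    S_mul_S, Matrix.one_mul, At_A]

lemma At_B : (mA G)ᵀ * mB G = mM G := by
  ext u v
  simp only [Matrix.mul_apply, transpose_apply, mA, mB, Matrix.of_apply, mM, adjMatrix_apply]
  rw [Finset.sum_congr rfl (fun e _ =>
    show _ = if e.fst = v ∧ e.snd = u then (1:ℝ) else 0 by
      rcases eq_or_ne e.snd u with h | h <;> rcases eq_or_ne e.fst v with h2 | h2 <;> simp_all)]
  rw [Finset.sum_boole]
  by_cases h : G.Adj u v
  · rw [if_pos h]
    have : filter (fun e : G.Dart => e.fst = v ∧ e.snd = u) univ = {Dart.mk (v,u) h.symm} := by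
      ext e
      simp [Dart.ext_iff, Prod.ext_iff]
    rw [this]
    simp
  · rw [if_neg h]
    have : filter (fun e : G.Dart => e.fst = v ∧ e.snd = u) univ = ∅ := by
      ext e
      simp only [mem_filter, mem_univ, true_and, Finset.notMem_empty, iff_false]
      rintro ⟨h1, h2⟩
      exact h (h1 ▸ h2 ▸ e.adj).symm
    rw [this]
    simp

lemma Bt_A : (mB G)ᵀ * mA G = mM G := by
  have := congrArg Matrix.transpose (At_B G)
  rwa [transpose_mul, transpose_transpose, mM, transpose_adjMatrix, ← mM] at this

lemma M_transpose : (mM G)ᵀ = mM G := by rw [mM, transpose_adjMatrix]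

lemma E_transpose : (mE G)ᵀ = mE G := diagonal_transpose _
lemma P_transpose : (mP G)ᵀ = mP G := by
  rw [mP, transpose_mul, transpose_mul, transpose_transpose, E_transpose, Matrix.mul_assoc]
lemma Q_transpose : (mQ G)ᵀ = mQ G := by
  rw [mQ, transpose_mul, transpose_mul, transpose_transpose, E_transpose, Matrix.mul_assoc]

lemma deg_pos (hG : G.Connected) (hn : 2 ≤ Fintype.card V) (u : V) : 0 < G.degree u := by
  rw [G.degree_pos_iff_exists_adj]
  obtain ⟨v, hv⟩ := Fintype.exists_ne_of_one_lt_card (by omega) u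
  obtain ⟨w⟩ := hG.preconnected u v
  cases w with
  | nil => exact absurd rfl hv.symm
  | cons h _ => exact ⟨_, h⟩

lemma E_mul_D (hd : ∀ u : V, 0 < G.degree u) : mE G * mD G = 1 := by
  rw [mE, mD, diagonal_mul_diagonal, ← diagonal_one]
  exact congrArg Matrix.diagonal (funext fun u =>
    inv_mul_cancel₀ (show deg G u ≠ 0 from Nat.cast_ne_zero.mpr (hd u).ne'))

lemma D_mul_E (hd : ∀ u : V, 0 < G.degree u) : mD G * mE G = 1 := by
  rw [mD, mE, diagonal_mul_diagonal, ← diagonal_one]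
  exact congrArg Matrix.diagonal (funext fun u =>
    mul_inv_cancel₀ (show deg G u ≠ 0 from Nat.cast_ne_zero.mpr (hd u).ne'))

lemma At_S : (mA G)ᵀ * mS G = (mB G)ᵀ := by
  have := congrArg Matrix.transpose (S_mul_A G)
  rwa [transpose_mul, S_transpose] at this

lemma P_idem (hd : ∀ u : V, 0 < G.degree u) : mP G * mP G = mP G := by
  rw [mP]
  calc mA G * mE G * (mA G)ᵀ * (mA G * mE G * (mA G)ᵀ)
      = mA G * mE G * ((mA G)ᵀ * mA G) * mE G * (mA G)ᵀ := by simp only [Matrix.mul_assoc]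
    _ = mA G * (mE G * mD G) * mE G * (mA G)ᵀ := by rw [At_A]; simp only [Matrix.mul_assoc]
    _ = mA G * mE G * (mA G)ᵀ := by rw [E_mul_D G hd, Matrix.mul_one]

lemma Q_idem (hd : ∀ u : V, 0 < G.degree u) : mQ G * mQ G = mQ G := by
  rw [mQ]
  calc mB G * mE G * (mB G)ᵀ * (mB G * mE G * (mB G)ᵀ)
      = mB G * mE G * ((mB G)ᵀ * mB G) * mE G * (mB G)ᵀ := by simp only [Matrix.mul_assoc]
    _ = mB G * (mE G * mD G) * mE G * (mB G)ᵀ := by rw [Bt_B]; simp only [Matrix.mul_assoc]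
    _ = mB G * mE G * (mB G)ᵀ := by rw [E_mul_D G hd, Matrix.mul_one]

lemma SPS : mS G * mP G * mS G = mQ G := by
  rw [mP, mQ]
  calc mS G * (mA G * mE G * (mA G)ᵀ) * mS G
      = (mS G * mA G) * mE G * ((mA G)ᵀ * mS G) := by simp only [Matrix.mul_assoc]
    _ = mB G * mE G * (mB G)ᵀ := by rw [S_mul_A, At_S]

lemma RP_sq (hd : ∀ u : V, 0 < G.degree u) :
    (mP G + mP G - 1) * (mP G + mP G - 1) = 1 := by
  have h : (mP G + mP G - 1) * (mP G + mP G - 1) =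
      (mP G * mP G + mP G * mP G + (mP G * mP G + mP G * mP G))
        - (mP G + mP G + (mP G + mP G)) + 1 := by noncomm_ring
  rw [h, P_idem G hd]
  abel

lemma RQ_sq (hd : ∀ u : V, 0 < G.degree u) :
    (mQ G + mQ G - 1) * (mQ G + mQ G - 1) = 1 := by
  have h : (mQ G + mQ G - 1) * (mQ G + mQ G - 1) =
      (mQ G * mQ G + mQ G * mQ G + (mQ G * mQ G + mQ G * mQ G))
        - (mQ G + mQ G + (mQ G + mQ G)) + 1 := by noncomm_ring
  rw [h, Q_idem G hd]
  abel

lemma U_sq : mU G * mU G = (mQ G + mQ G - 1) * (mP G + mP G - 1) := by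
  rw [mU]
  calc mS G * (mP G + mP G - 1) * (mS G * (mP G + mP G - 1))
      = (mS G * mP G * mS G + mS G * mP G * mS G - mS G * mS G) * (mP G + mP G - 1) := by
        noncomm_ring
    _ = _ := by rw [SPS, S_mul_S]

lemma hexp1 (M N : Matrix G.Dart G.Dart ℝ) :
    (M + M - 1) * (N + N - 1)
      = (M*N + M*N + (M*N + M*N)) - (M + M) - (N + N) + 1 := by noncomm_ring

lemma hexp2 (M N : Matrix G.Dart G.Dart ℝ) :
    (M + M - 1) * (N + N - 1)
      = (M*N + M*N + (M*N + M*N)) - (N + N) - (M + M) + 1 := by noncomm_ring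

lemma U_four (hd : ∀ u : V, 0 < G.degree u) :
    mU G ^ 4 = (mQ G + mQ G - 1) * (mP G + mP G - 1) * ((mQ G + mQ G - 1) * (mP G + mP G - 1)) := by
  have : mU G ^ 4 = (mU G * mU G) * (mU G * mU G) := by
    rw [show (4:ℕ) = 2 + 2 from rfl, pow_add, pow_two]
  rw [this, U_sq]

lemma U4_iff_comm (hd : ∀ u : V, 0 < G.degree u) :
    mU G ^ 4 = 1 ↔ mP G * mQ G = mQ G * mP G := by
  set RP := mP G + mP G - 1 with hRPdef
  set RQ := mQ G + mQ G - 1 with hRQdef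
  have hRP : RP * RP = 1 := RP_sq G hd
  have hRQ : RQ * RQ = 1 := RQ_sq G hd
  rw [U_four G hd]
  constructor
  · intro h
    have e1 : RQ * (RQ * RP * (RQ * RP)) = RQ := by rw [h, mul_one]
    have e2 : RQ * (RQ * RP * (RQ * RP)) = RP * (RQ * RP) := by
      calc RQ * (RQ * RP * (RQ * RP)) = (RQ * RQ) * (RP * (RQ * RP)) := by noncomm_ring
        _ = RP * (RQ * RP) := by rw [hRQ, one_mul]
    have e3 : RP * (RQ * RP) = RQ := by rw [← e2, e1]
    have e4 : RP * (RQ * RP) * RP = RQ * RP := by rw [e3]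
    have e5 : RP * RQ = RQ * RP := by
      calc RP * RQ = RP * RQ * (RP * RP) := by rw [hRP, mul_one]
        _ = RP * (RQ * RP) * RP := by noncomm_ring
        _ = RQ * RP := e4
    -- expand
    rw [hRPdef, hRQdef, hexp1, hexp2] at e5
    have e6 : mP G * mQ G + mP G * mQ G + (mP G * mQ G + mP G * mQ G)
        = mQ G * mP G + mQ G * mP G + (mQ G * mP G + mQ G * mP G) := by
      have := e5
      rwa [add_left_inj, sub_left_inj, sub_left_inj] at this
    ext e f
    have := congrFun (congrFun e6 e) f
    simp only [Matrix.add_apply] at this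
    linarith
  · intro h
    have hcomm : RP * RQ = RQ * RP := by
      rw [hRPdef, hRQdef, hexp1, hexp2, h]
    calc RQ * RP * (RQ * RP) = RQ * (RP * RQ) * RP := by noncomm_ring
      _ = RQ * (RQ * RP) * RP := by rw [hcomm]
      _ = (RQ * RQ) * (RP * RP) := by noncomm_ring
      _ = 1 := by rw [hRP, hRQ, one_mul]

lemma At_B_assoc {α : Type*} [Fintype α] (X : Matrix V α ℝ) :
    (mA G)ᵀ * (mB G * X) = mM G * X := by rw [← Matrix.mul_assoc, At_B]
lemma Bt_A_assoc {α : Type*} [Fintype α] (X : Matrix V α ℝ) :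
    (mB G)ᵀ * (mA G * X) = mM G * X := by rw [← Matrix.mul_assoc, Bt_A]

lemma trace_PQ : (mP G * mQ G).trace = (mT G * mT G).trace := by
  have h : mP G * mQ G = mA G * (mE G * ((mA G)ᵀ * (mB G * (mE G * (mB G)ᵀ)))) := by
    simp only [mP, mQ, Matrix.mul_assoc]
  rw [h, Matrix.trace_mul_comm]
  congr 1
  simp only [Matrix.mul_assoc, mT, Bt_A, At_B_assoc]

lemma trace_PQPQ :
    ((mP G * mQ G) * (mP G * mQ G)).trace = ((mT G * mT G) * (mT G * mT G)).trace := by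
  have h : (mP G * mQ G) * (mP G * mQ G) =
      mA G * (mE G * ((mA G)ᵀ * (mB G * (mE G * ((mB G)ᵀ *
        (mA G * (mE G * ((mA G)ᵀ * (mB G * (mE G * (mB G)ᵀ)))))))))) := by
    simp only [mP, mQ, Matrix.mul_assoc]
  rw [h, Matrix.trace_mul_comm]
  congr 1
  simp only [Matrix.mul_assoc, mT, Bt_A, At_B_assoc, Bt_A_assoc]

lemma trace_transpose_mul_self_zero {n : Type*} [Fintype n] [DecidableEq n]
    (X : Matrix n n ℝ) (h : (Xᵀ * X).trace = 0) : X = 0 := by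
  have h2 : ∑ j, ∑ i, (X i j)^2 = 0 := by
    simpa [Matrix.trace, Matrix.diag, Matrix.mul_apply, pow_two] using h
  ext i j
  have h3 := (Finset.sum_eq_zero_iff_of_nonneg (fun j _ => Finset.sum_nonneg
    (fun i _ => sq_nonneg (X i j)))).mp h2 j (mem_univ j)
  have h4 := (Finset.sum_eq_zero_iff_of_nonneg (fun i _ => sq_nonneg (X i j))).mp h3 i (mem_univ i)
  simpa using pow_eq_zero_iff (n := 2) (by norm_num) |>.mp h4

lemma comm_iff_trace (hd : ∀ u : V, 0 < G.degree u) :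
    mP G * mQ G = mQ G * mP G ↔
      ((mT G * mT G) * (mT G * mT G)).trace = (mT G * mT G).trace := by
  set X : Matrix G.Dart G.Dart ℝ := mP G * mQ G - mQ G * mP G with hX
  have hXt : Xᵀ = mQ G * mP G - mP G * mQ G := by
    rw [hX, transpose_sub, transpose_mul, transpose_mul, P_transpose, Q_transpose]
  have hexp : Xᵀ * X =
      mQ G * (mP G * (mP G * mQ G)) - mQ G * (mP G * (mQ G * mP G))
        - mP G * (mQ G * (mP G * mQ G)) + mP G * (mQ G * (mQ G * mP G)) := by
    rw [hXt, hX]; noncomm_ring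
  have h1 : (mQ G * (mP G * (mP G * mQ G))).trace = (mT G * mT G).trace := by
    rw [← Matrix.mul_assoc (mP G) (mP G) (mQ G), P_idem G hd, Matrix.trace_mul_comm,
      Matrix.mul_assoc, Q_idem G hd, trace_PQ]
  have h2 : (mP G * (mQ G * (mQ G * mP G))).trace = (mT G * mT G).trace := by
    rw [← Matrix.mul_assoc (mQ G) (mQ G) (mP G), Q_idem G hd, Matrix.trace_mul_comm,
      Matrix.mul_assoc, P_idem G hd, Matrix.trace_mul_comm, trace_PQ]
  have h3 : (mQ G * (mP G * (mQ G * mP G))).trace = ((mT G * mT G) * (mT G * mT G)).trace := by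
    rw [Matrix.trace_mul_comm, ← trace_PQPQ]
    congr 1
    simp only [Matrix.mul_assoc]
  have h4 : (mP G * (mQ G * (mP G * mQ G))).trace = ((mT G * mT G) * (mT G * mT G)).trace := by
    rw [← trace_PQPQ]
    congr 1
    simp only [Matrix.mul_assoc]
  have htr : (Xᵀ * X).trace =
      (mT G * mT G).trace + (mT G * mT G).trace
        - (((mT G * mT G) * (mT G * mT G)).trace + ((mT G * mT G) * (mT G * mT G)).trace) := by
    rw [hexp, Matrix.trace_add, Matrix.trace_sub, Matrix.trace_sub, h1, h2, h3, h4]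
    ring
  constructor
  · intro h
    have hX0 : X = 0 := by rw [hX, h, sub_self]
    have : (Xᵀ * X).trace = 0 := by rw [hX0]; simp
    rw [htr] at this
    linarith
  · intro h
    have h0 : (Xᵀ * X).trace = 0 := by rw [htr, h]; ring
    have := trace_transpose_mul_self_zero X h0
    rw [hX] at this
    exact sub_eq_zero.mp this

noncomputable def sq (u : V) : ℝ := Real.sqrt (deg G u)
noncomputable def mF : Matrix V V ℝ := Matrix.diagonal (sq G)
noncomputable def mFi : Matrix V V ℝ := Matrix.diagonal fun u => (sq G u)⁻¹
noncomputable def mH : Matrix V V ℝ := mFi G * mM G * mFi G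

lemma sq_sq (hd : ∀ u : V, 0 < G.degree u) (u : V) : sq G u * sq G u = deg G u :=
  Real.mul_self_sqrt (by unfold deg; positivity)

lemma sq_pos (hd : ∀ u : V, 0 < G.degree u) (u : V) : 0 < sq G u :=
  Real.sqrt_pos.mpr (by have := hd u; simp only [deg]; exact_mod_cast this)

lemma F_mul_Fi (hd : ∀ u : V, 0 < G.degree u) : mF G * mFi G = 1 := by
  rw [mF, mFi, diagonal_mul_diagonal, ← diagonal_one]
  exact congrArg Matrix.diagonal (funext fun u => mul_inv_cancel₀ (sq_pos G hd u).ne')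

lemma Fi_mul_F (hd : ∀ u : V, 0 < G.degree u) : mFi G * mF G = 1 := by
  rw [mF, mFi, diagonal_mul_diagonal, ← diagonal_one]
  exact congrArg Matrix.diagonal (funext fun u => inv_mul_cancel₀ (sq_pos G hd u).ne')

lemma Fi_mul_Fi (hd : ∀ u : V, 0 < G.degree u) : mFi G * mFi G = mE G := by
  rw [mE, mFi, diagonal_mul_diagonal]
  exact congrArg Matrix.diagonal (funext fun u => by
    rw [← mul_inv, sq_sq G hd])

lemma T_sim (hd : ∀ u : V, 0 < G.degree u) : mT G = mFi G * mH G * mF G := by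
  rw [mT, mH, ← Fi_mul_Fi G hd]
  simp only [Matrix.mul_assoc, Fi_mul_F G hd, Matrix.mul_one]

lemma H_herm : (mH G).IsHermitian := by
  have ht : (mH G)ᵀ = mH G := by
    rw [mH, transpose_mul, transpose_mul, mFi, diagonal_transpose, mM, transpose_adjMatrix,
      Matrix.mul_assoc]
  rw [Matrix.IsHermitian, conjTranspose_eq_transpose_of_trivial, ht]

noncomputable def eigs : V → ℝ := (H_herm G).eigenvalues
noncomputable def mW : Matrix V V ℝ := ((H_herm G).eigenvectorUnitary : Matrix V V ℝ)

lemma W_mul_Ws : mW G * star (mW G) = 1 :=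
  Matrix.mem_unitaryGroup_iff.mp ((H_herm G).eigenvectorUnitary).2

lemma Ws_mul_W : star (mW G) * mW G = 1 :=
  Matrix.mem_unitaryGroup_iff'.mp ((H_herm G).eigenvectorUnitary).2

lemma H_spec : mH G = mW G * Matrix.diagonal (eigs G) * star (mW G) := by
  have h := (H_herm G).spectral_theorem
  have : Matrix.diagonal (RCLike.ofReal ∘ (H_herm G).eigenvalues) = Matrix.diagonal (eigs G) := by
    congr 1
  rw [← this]
  exact h

lemma charpoly_conj {n : Type*} [Fintype n] [DecidableEq n] (M N Ni : Matrix n n ℝ)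
    (h1 : N * Ni = 1) (h2 : Ni * N = 1) : (N * M * Ni).charpoly = M.charpoly := by
  unfold Matrix.charpoly
  have hNNi : (N.map (C : ℝ → ℝ[X])) * (Ni.map C) = 1 := by
    rw [← Matrix.map_mul (f := (C : ℝ →+* ℝ[X])), h1,
      Matrix.map_one _ (map_zero C) (map_one C)]
  have hc : charmatrix (N * M * Ni) = (N.map C) * charmatrix M * (Ni.map C) := by
    unfold charmatrix
    rw [Matrix.mul_sub, Matrix.sub_mul]
    congr 1
    · have hcomm : (N.map (C : ℝ → ℝ[X])) * Matrix.scalar n (X : ℝ[X])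
          = Matrix.scalar n (X : ℝ[X]) * N.map C :=
        (Matrix.scalar_commute (X : ℝ[X]) (fun r => Commute.all _ r) (N.map C)).symm
      rw [hcomm, Matrix.mul_assoc, hNNi, Matrix.mul_one]
    · rw [RingHom.mapMatrix_apply, RingHom.mapMatrix_apply,
        Matrix.map_mul (f := (C : ℝ →+* ℝ[X])), Matrix.map_mul (f := (C : ℝ →+* ℝ[X]))]
  rw [hc, det_mul, det_mul]
  have hdet : det (N.map (C : ℝ → ℝ[X])) * det (Ni.map C) = 1 := by
    rw [← det_mul, hNNi, det_one]
  calc det (N.map (C : ℝ → ℝ[X])) * det (charmatrix M) * det (Ni.map C)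
      = det (charmatrix M) * (det (N.map (C : ℝ → ℝ[X])) * det (Ni.map C)) := by ring
    _ = det (charmatrix M) := by rw [hdet, mul_one]

lemma charpoly_diagonal {n : Type*} [Fintype n] [DecidableEq n] (v : n → ℝ) :
    (Matrix.diagonal v).charpoly = ∏ i, (X - C (v i)) := by
  unfold Matrix.charpoly
  have : charmatrix (Matrix.diagonal v) = Matrix.diagonal (fun i => (X : ℝ[X]) - C (v i)) := by
    ext i j
    by_cases h : i = j
    · subst h; rw [charmatrix_apply_eq, diagonal_apply_eq, diagonal_apply_eq]
    · rw [charmatrix_apply_ne _ _ _ h, diagonal_apply_ne _ h, diagonal_apply_ne _ h, map_zero,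
        neg_zero]
  rw [this, det_diagonal]

lemma charpoly_T (hd : ∀ u : V, 0 < G.degree u) :
    (mT G).charpoly = ∏ i, (X - C (eigs G i)) := by
  rw [T_sim G hd, charpoly_conj _ _ _ (Fi_mul_F G hd) (F_mul_Fi G hd)]
  rw [H_spec G, charpoly_conj _ _ _ (W_mul_Ws G) (Ws_mul_W G), charpoly_diagonal]

lemma H_pow (k : ℕ) :
    mH G ^ k = mW G * (Matrix.diagonal (eigs G)) ^ k * star (mW G) := by
  induction k with
  | zero => simp [pow_zero, W_mul_Ws G]
  | succ k ih =>
    rw [pow_succ, pow_succ, ih, H_spec G]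
    calc mW G * Matrix.diagonal (eigs G) ^ k * star (mW G) *
          (mW G * Matrix.diagonal (eigs G) * star (mW G))
        = mW G * Matrix.diagonal (eigs G) ^ k * (star (mW G) * mW G) *
            Matrix.diagonal (eigs G) * star (mW G) := by simp only [Matrix.mul_assoc]
      _ = _ := by rw [Ws_mul_W G, Matrix.mul_one]; simp only [Matrix.mul_assoc]

lemma trace_H_pow (k : ℕ) : (mH G ^ k).trace = ∑ i, (eigs G i) ^ k := by
  rw [H_pow G k, Matrix.trace_mul_comm, ← Matrix.mul_assoc, Ws_mul_W G, Matrix.one_mul,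
    diagonal_pow, trace_diagonal]
  simp

lemma T_pow_sim (hd : ∀ u : V, 0 < G.degree u) (k : ℕ) :
    mT G ^ k = mFi G * mH G ^ k * mF G := by
  induction k with
  | zero => simp [pow_zero, Fi_mul_F G hd]
  | succ k ih =>
    rw [pow_succ, pow_succ, ih, T_sim G hd]
    calc mFi G * mH G ^ k * mF G * (mFi G * mH G * mF G)
        = mFi G * mH G ^ k * (mF G * mFi G) * mH G * mF G := by simp only [Matrix.mul_assoc]
      _ = _ := by rw [F_mul_Fi G hd, Matrix.mul_one]; simp only [Matrix.mul_assoc]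

lemma trace_T_pow (hd : ∀ u : V, 0 < G.degree u) (k : ℕ) :
    (mT G ^ k).trace = ∑ i, (eigs G i) ^ k := by
  rw [T_pow_sim G hd k, Matrix.trace_mul_comm, ← Matrix.mul_assoc, F_mul_Fi G hd,
    Matrix.one_mul, trace_H_pow]

lemma sum_eigs_eq_zero : ∑ i, eigs G i = 0 := by
  have h1 : (mH G).trace = ∑ i, eigs G i := by
    have := trace_H_pow G 1
    simpa using this
  rw [← h1, mH, Matrix.trace]
  apply Finset.sum_eq_zero
  intro u _
  show (mFi G * mM G * mFi G) u u = 0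
  rw [Matrix.mul_apply]
  apply Finset.sum_eq_zero
  intro x _
  rcases eq_or_ne x u with rfl | hxu
  · rw [mFi, mM, Matrix.diagonal_mul]
    simp [G.irrefl]
  · rw [mFi, diagonal_apply_ne _ hxu, mul_zero]

lemma mulVec_diag (d : V → ℝ) (x : V → ℝ) (u : V) :
    (Matrix.diagonal d *ᵥ x) u = d u * x u := by
  simp [Matrix.mulVec, Matrix.diagonal, dotProduct, Finset.sum_ite_eq, ite_mul]

lemma mulVec_T_apply (x : V → ℝ) (u : V) :
    (mT G *ᵥ x) u = (deg G u)⁻¹ * ∑ v ∈ G.neighborFinset u, x v := by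
  rw [mT, ← Matrix.mulVec_mulVec, mE, mulVec_diag]
  congr 1
  rw [mM, adjMatrix_mulVec_apply]

lemma perron (hG : G.Connected) (hd : ∀ u : V, 0 < G.degree u) (x : V → ℝ)
    (hx : mT G *ᵥ x = x) (v w : V) : x v = x w := by
  obtain ⟨u₀, -, hmax⟩ := Finset.exists_max_image (univ : Finset V) x ⟨v, mem_univ v⟩
  have key : ∀ a b : V, G.Adj a b → x a = x u₀ → x b = x u₀ := by
    intro a b hab ha
    by_contra hb
    have hblt : x b < x u₀ := lt_of_le_of_ne (hmax b (mem_univ b)) hb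
    have h1 : (mT G *ᵥ x) a = x a := congrFun hx a
    rw [mulVec_T_apply] at h1
    have hda : (0:ℝ) < deg G a := by unfold deg; exact_mod_cast hd a
    have hsum : ∑ z ∈ G.neighborFinset a, x z < ∑ z ∈ G.neighborFinset a, x u₀ := by
      apply Finset.sum_lt_sum (fun i _ => hmax i (mem_univ i))
      exact ⟨b, by simpa using hab, hblt⟩
    rw [Finset.sum_const, nsmul_eq_mul, G.card_neighborFinset_eq_degree] at hsum
    have hlt : x a < (deg G a)⁻¹ * (deg G a * x u₀) := by
      rw [← h1]
      apply mul_lt_mul_of_pos_left _ (inv_pos.mpr hda)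
      exact hsum
    rw [← mul_assoc, inv_mul_cancel₀ hda.ne', one_mul] at hlt
    rw [ha] at hlt
    exact lt_irrefl _ hlt
  have hall : ∀ (z y : V) (p : G.Walk z y), x z = x u₀ → x y = x u₀ := by
    intro z y p
    induction p with
    | nil => exact id
    | cons h q ih => intro hz; exact ih (key _ _ h hz)
  obtain ⟨p⟩ := hG.preconnected u₀ v
  obtain ⟨q⟩ := hG.preconnected u₀ w
  rw [hall _ _ p rfl, hall _ _ q rfl]

lemma eig_abs_le (hd : ∀ u : V, 0 < G.degree u) (μ : ℝ) (x : V → ℝ) (hx : x ≠ 0)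
    (h : mT G *ᵥ x = μ • x) : |μ| ≤ 1 := by
  obtain ⟨w, hw⟩ := Function.ne_iff.mp hx
  obtain ⟨u₀, -, hmax⟩ := Finset.exists_max_image (univ : Finset V) (fun u => |x u|)
    ⟨w, mem_univ w⟩
  have hpos : 0 < |x u₀| := lt_of_lt_of_le (abs_pos.mpr hw) (hmax w (mem_univ w))
  have h1 : (mT G *ᵥ x) u₀ = μ * x u₀ := by rw [h]; rfl
  rw [mulVec_T_apply] at h1
  have hda : (0:ℝ) < deg G u₀ := by unfold deg; exact_mod_cast hd u₀
  have hband : |μ * x u₀| ≤ |x u₀| := by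
    rw [← h1, abs_mul, abs_inv, abs_of_pos hda]
    have hb : |∑ z ∈ G.neighborFinset u₀, x z| ≤ deg G u₀ * |x u₀| := by
      refine le_trans (Finset.abs_sum_le_sum_abs _ _) ?_
      have := Finset.sum_le_card_nsmul (G.neighborFinset u₀) (fun z => |x z|) (|x u₀|)
        (fun z _ => hmax z (mem_univ z))
      rw [G.card_neighborFinset_eq_degree, nsmul_eq_mul] at this
      exact this
    calc (deg G u₀)⁻¹ * |∑ z ∈ G.neighborFinset u₀, x z|
        ≤ (deg G u₀)⁻¹ * (deg G u₀ * |x u₀|) :=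
          mul_le_mul_of_nonneg_left hb (by positivity)
      _ = |x u₀| := by rw [← mul_assoc, inv_mul_cancel₀ hda.ne', one_mul]
  rw [abs_mul] at hband
  have h2 : |μ| * |x u₀| ≤ 1 * |x u₀| := by rw [one_mul]; exact hband
  exact le_of_mul_le_mul_right h2 hpos

lemma T_eigenvector (hd : ∀ u : V, 0 < G.degree u) (i : V) :
    mT G *ᵥ (mFi G *ᵥ ⇑((H_herm G).eigenvectorBasis i)) =
      eigs G i • (mFi G *ᵥ ⇑((H_herm G).eigenvectorBasis i)) := by
  have h := (H_herm G).mulVec_eigenvectorBasis i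
  have hv : mF G *ᵥ (mFi G *ᵥ ⇑((H_herm G).eigenvectorBasis i))
      = ⇑((H_herm G).eigenvectorBasis i) := by
    rw [Matrix.mulVec_mulVec, F_mul_Fi G hd, Matrix.one_mulVec]
  rw [T_sim G hd, ← Matrix.mulVec_mulVec, hv, ← Matrix.mulVec_mulVec, h,
    Matrix.mulVec_smul]
  rfl

lemma eigenvec_ne_zero (i : V) : ⇑((H_herm G).eigenvectorBasis i) ≠ 0 := by
  intro h
  apply (H_herm G).eigenvectorBasis.orthonormal.ne_zero i
  ext u
  exact congrFun h u

lemma abs_eigs_le_one (hd : ∀ u : V, 0 < G.degree u) (i : V) : |eigs G i| ≤ 1 := by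
  apply eig_abs_le G hd _ (mFi G *ᵥ ⇑((H_herm G).eigenvectorBasis i)) _ (T_eigenvector G hd i)
  intro h0
  apply eigenvec_ne_zero G i
  have : mF G *ᵥ (mFi G *ᵥ ⇑((H_herm G).eigenvectorBasis i))
      = ⇑((H_herm G).eigenvectorBasis i) := by
    rw [Matrix.mulVec_mulVec, F_mul_Fi G hd, Matrix.one_mulVec]
  rw [← this, h0, Matrix.mulVec_zero]

lemma trace_iff_eigs (hd : ∀ u : V, 0 < G.degree u) :
    ((mT G * mT G) * (mT G * mT G)).trace = (mT G * mT G).trace ↔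
      ∀ i, eigs G i = 1 ∨ eigs G i = -1 ∨ eigs G i = 0 := by
  have h2 : (mT G * mT G).trace = ∑ i, eigs G i ^ 2 := by
    rw [← trace_T_pow G hd 2, pow_two]
  have h4 : ((mT G * mT G) * (mT G * mT G)).trace = ∑ i, eigs G i ^ 4 := by
    rw [← trace_T_pow G hd 4]
    congr 1
    rw [show (4:ℕ) = 2+2 from rfl, pow_add, pow_two]
  rw [h2, h4]
  constructor
  · intro h i
    have hsum : ∑ j, (eigs G j ^ 2 - eigs G j ^ 4) = 0 := by
      rw [Finset.sum_sub_distrib, h, sub_self]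
    have hnn : ∀ j ∈ (univ : Finset V), 0 ≤ eigs G j ^ 2 - eigs G j ^ 4 := by
      intro j _
      have habs := abs_eigs_le_one G hd j
      have h1 : eigs G j ^ 2 ≤ 1 := by
        rw [← sq_abs]
        nlinarith [abs_nonneg (eigs G j)]
      nlinarith [sq_nonneg (eigs G j)]
    have hi := (Finset.sum_eq_zero_iff_of_nonneg hnn).mp hsum i (mem_univ i)
    have hfac : eigs G i ^ 2 * (1 - eigs G i ^ 2) = 0 := by nlinarith [hi]
    rcases mul_eq_zero.mp hfac with h1 | h1
    · right; right; exact pow_eq_zero_iff (two_ne_zero) |>.mp h1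
    · have h3 : (eigs G i - 1) * (eigs G i + 1) = 0 := by nlinarith [h1]
      rcases mul_eq_zero.mp h3 with h5 | h5
      · left; linarith
      · right; left; linarith
  · intro h
    apply Finset.sum_congr rfl
    intro i _
    rcases h i with hh|hh|hh <;> rw [hh] <;> norm_num

lemma H_fixes_sqrt (hd : ∀ u : V, 0 < G.degree u) : mH G *ᵥ (sq G) = sq G := by
  rw [mH, ← Matrix.mulVec_mulVec, ← Matrix.mulVec_mulVec]
  have h1 : mFi G *ᵥ sq G = fun _ => (1:ℝ) := by
    funext u
    rw [mFi, mulVec_diag]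
    exact inv_mul_cancel₀ (sq_pos G hd u).ne'
  rw [h1]
  have h2 : mM G *ᵥ (fun _ => (1:ℝ)) = fun u => deg G u := by
    funext u
    rw [mM, adjMatrix_mulVec_apply]
    rw [Finset.sum_const, nsmul_eq_mul, G.card_neighborFinset_eq_degree, mul_one]
    rfl
  rw [h2]
  funext u
  rw [mFi, mulVec_diag, ← sq_sq G hd u, ← mul_assoc, inv_mul_cancel₀ (sq_pos G hd u).ne',
    one_mul]

lemma sq_ne_zero_vec (hd : ∀ u : V, 0 < G.degree u) (hne : Nonempty V) : sq G ≠ 0 := by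
  obtain ⟨u⟩ := hne
  intro h
  exact (sq_pos G hd u).ne' (congrFun h u)

lemma exists_eig_one (hd : ∀ u : V, 0 < G.degree u) (hne : Nonempty V) :
    ∃ i, eigs G i = 1 := by
  by_contra hno
  push_neg at hno
  set y := star (mW G) *ᵥ sq G with hy
  have hWy : mW G *ᵥ y = sq G := by
    rw [hy, Matrix.mulVec_mulVec, W_mul_Ws G, Matrix.one_mulVec]
  have hfix := H_fixes_sqrt G hd
  rw [H_spec G, ← Matrix.mulVec_mulVec, ← Matrix.mulVec_mulVec, ← hy] at hfix
  -- hfix : mW G *ᵥ (diagonal (eigs G) *ᵥ y) = sq G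
  have hdy : Matrix.diagonal (eigs G) *ᵥ y = y := by
    have := congrArg (fun z => star (mW G) *ᵥ z) (hfix.trans hWy.symm)
    simpa [Matrix.mulVec_mulVec, ← Matrix.mul_assoc, Ws_mul_W G, Matrix.one_mul,
      Matrix.one_mulVec] using this
  have hy0 : y = 0 := by
    funext i
    have := congrFun hdy i
    rw [mulVec_diag] at this
    have h1 : (eigs G i - 1) * y i = 0 := by linarith [this]
    rcases mul_eq_zero.mp h1 with h2 | h2
    · exact absurd (by linarith : eigs G i = 1) (hno i)
    · exact h2
  apply sq_ne_zero_vec G hd hne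
  rw [← hWy, hy0, Matrix.mulVec_zero]

lemma eig_one_unique (hG : G.Connected) (hd : ∀ u : V, 0 < G.degree u) (hne : Nonempty V)
    (i j : V) (hi : eigs G i = 1) (hj : eigs G j = 1) : i = j := by
  by_contra hij
  obtain ⟨u₀⟩ := hne
  have hconst : ∀ (k : V), eigs G k = 1 → ∃ c : ℝ, c ≠ 0 ∧
      ∀ u, ⇑((H_herm G).eigenvectorBasis k) u = sq G u * c := by
    intro k hk
    have hT := T_eigenvector G hd k
    rw [hk, one_smul] at hT
    set x := mFi G *ᵥ ⇑((H_herm G).eigenvectorBasis k) with hx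
    have hcn : ∀ u, x u = x u₀ := fun u => perron G hG hd x hT u u₀
    have hvF : ∀ u, ⇑((H_herm G).eigenvectorBasis k) u = sq G u * x u := by
      intro u
      have hFx : mF G *ᵥ x = ⇑((H_herm G).eigenvectorBasis k) := by
        rw [hx, Matrix.mulVec_mulVec, F_mul_Fi G hd, Matrix.one_mulVec]
      rw [← hFx, mF, mulVec_diag]
    refine ⟨x u₀, ?_, fun u => by rw [hvF u, hcn u]⟩
    intro h0
    apply eigenvec_ne_zero G k
    funext u
    rw [Pi.zero_apply, hvF u, hcn u, h0, mul_zero]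
  obtain ⟨ci, hci, hvi⟩ := hconst i hi
  obtain ⟨cj, hcj, hvj⟩ := hconst j hj
  have horth : (inner ℝ ((H_herm G).eigenvectorBasis i) ((H_herm G).eigenvectorBasis j) : ℝ) = 0 :=
    (H_herm G).eigenvectorBasis.orthonormal.2 hij
  rw [PiLp.inner_apply] at horth
  simp only [RCLike.inner_apply, starRingEnd_apply, star_trivial] at horth
  have hsum : ∑ u, (sq G u * ci) * (sq G u * cj) = 0 := by
    rw [← horth]
    apply Finset.sum_congr rfl
    intro u _
    rw [hvi u, hvj u]; ring
  have hpos : 0 < ∑ u : V, deg G u :=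
    Finset.sum_pos (fun u _ => by unfold deg; exact_mod_cast hd u) ⟨u₀, mem_univ u₀⟩
  have hz : ci * cj * ∑ u : V, deg G u = 0 := by
    rw [← hsum, Finset.mul_sum]
    apply Finset.sum_congr rfl
    intro u _
    rw [← sq_sq G hd u]
    ring
  rcases mul_eq_zero.mp hz with h | h
  · rcases mul_eq_zero.mp h with h | h
    exacts [hci h, hcj h]
  · linarith

lemma charpoly_iff_eigs (hG : G.Connected) (hn : 3 ≤ Fintype.card V)
    (hd : ∀ u : V, 0 < G.degree u) :
    (mT G).charpoly = (X - C (-1)) * (X - C 1) * X ^ (Fintype.card V - 2) ↔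
      ∀ i, eigs G i = 1 ∨ eigs G i = -1 ∨ eigs G i = 0 := by
  have hne : Nonempty V := Fintype.card_pos_iff.mp (by omega)
  constructor
  · intro h i
    have hroot : eval (eigs G i) ((mT G).charpoly) = 0 := by
      rw [charpoly_T G hd, eval_prod]
      exact Finset.prod_eq_zero (mem_univ i) (by simp)
    rw [h] at hroot
    simp only [eval_mul, eval_pow, eval_sub, eval_X, eval_C] at hroot
    rcases mul_eq_zero.mp hroot with h1 | h1
    · rcases mul_eq_zero.mp h1 with h2 | h2
      · right; left; linarith [sub_eq_zero.mp h2]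
      · left; linarith [sub_eq_zero.mp h2]
    · right; right; exact pow_eq_zero_iff (by omega) |>.mp h1
  · intro h
    obtain ⟨i₁, hi₁⟩ := exists_eig_one G hd hne
    set p : V → Prop := fun i => eigs G i = 1 with hp
    set s1 : Finset V := univ.filter p with hs1def
    set srest : Finset V := univ.filter (fun i => ¬ p i) with hsrestdef
    set q : V → Prop := fun i => eigs G i = -1 with hq
    set s2 : Finset V := srest.filter q with hs2def
    set s3 : Finset V := srest.filter (fun i => ¬ q i) with hs3def
    have hs1 : s1 = {i₁} := by
      ext k
      simp only [hs1def, mem_filter, mem_univ, true_and, mem_singleton, hp]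
      exact ⟨fun hk => eig_one_unique G hG hd hne k i₁ hk hi₁, fun hk => hk ▸ hi₁⟩
    have hs3eigs : ∀ k ∈ s3, eigs G k = 0 := by
      intro k hk
      simp only [hs3def, hsrestdef, mem_filter, mem_univ, true_and, hp, hq] at hk
      rcases h k with h1|h1|h1
      · exact absurd h1 hk.1
      · exact absurd h1 hk.2
      · exact h1
    -- cardinality of s2
    have hsum0 := sum_eigs_eq_zero G
    have hsplit1 : ∑ i, eigs G i = (∑ i ∈ s1, eigs G i) + ∑ i ∈ srest, eigs G i := by
      rw [hs1def, hsrestdef]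
      exact (Finset.sum_filter_add_sum_filter_not univ p _).symm
    have hsplit2 : ∑ i ∈ srest, eigs G i = (∑ i ∈ s2, eigs G i) + ∑ i ∈ s3, eigs G i := by
      rw [hs2def, hs3def]
      exact (Finset.sum_filter_add_sum_filter_not srest q _).symm
    have hsum1 : ∑ i ∈ s1, eigs G i = 1 := by rw [hs1, Finset.sum_singleton, hi₁]
    have hsum2 : ∑ i ∈ s2, eigs G i = -(s2.card : ℝ) := by
      rw [Finset.sum_congr rfl (fun k hk => by
        simp only [hs2def, mem_filter, hq] at hk
        exact hk.2), Finset.sum_const, nsmul_eq_mul, mul_neg_one]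
    have hsum3 : ∑ i ∈ s3, eigs G i = 0 :=
      Finset.sum_eq_zero hs3eigs
    have hcard2 : (s2.card : ℝ) = 1 := by
      rw [hsplit1, hsplit2, hsum1, hsum2, hsum3] at hsum0
      linarith
    have hcard2' : s2.card = 1 := by exact_mod_cast hcard2
    -- cardinality of s3
    have hcardsplit1 : s1.card + srest.card = Fintype.card V := by
      rw [hs1def, hsrestdef]
      rw [Finset.card_filter_add_card_filter_not]
      exact Finset.card_univ
    have hcardsplit2 : s2.card + s3.card = srest.card := by
      rw [hs2def, hs3def]
      exact Finset.card_filter_add_card_filter_not _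
    have hcard1 : s1.card = 1 := by rw [hs1, Finset.card_singleton]
    have hcard3 : s3.card = Fintype.card V - 2 := by omega
    -- assemble product
    rw [charpoly_T G hd]
    have hprod1 : ∏ i, (X - C (eigs G i))
        = (∏ i ∈ s1, (X - C (eigs G i))) * ∏ i ∈ srest, (X - C (eigs G i)) := by
      rw [hs1def, hsrestdef]
      exact (Finset.prod_filter_mul_prod_filter_not univ p _).symm
    have hprod2 : ∏ i ∈ srest, (X - C (eigs G i))
        = (∏ i ∈ s2, (X - C (eigs G i))) * ∏ i ∈ s3, (X - C (eigs G i)) := by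
      rw [hs2def, hs3def]
      exact (Finset.prod_filter_mul_prod_filter_not srest q _).symm
    have hp1 : ∏ i ∈ s1, (X - C (eigs G i)) = X - C 1 := by
      rw [hs1, Finset.prod_singleton, hi₁]
    have hp2 : ∏ i ∈ s2, (X - C (eigs G i)) = (X - C (-1)) ^ 1 := by
      rw [← hcard2']
      rw [Finset.prod_congr rfl (fun k hk => by
        simp only [hs2def, mem_filter, hq] at hk
        rw [hk.2])]
      exact Finset.prod_const _
    have hp3 : ∏ i ∈ s3, (X - C (eigs G i)) = X ^ (Fintype.card V - 2) := by
      rw [← hcard3]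
      rw [Finset.prod_congr rfl (fun k hk => by rw [hs3eigs k hk, map_zero, sub_zero])]
      exact Finset.prod_const _
    rw [hprod1, hprod2, hp1, hp2, hp3]
    ring

lemma T_transition : transitionMatrix G = mT G := by
  ext u v
  rw [mT, mE, Matrix.diagonal_mul]
  simp only [transitionMatrix, mM, deg, adjMatrix_apply, mul_ite, mul_one, mul_zero, one_div]

lemma P_apply (e f : G.Dart) :
    mP G e f = if e.snd = f.snd then (deg G f.snd)⁻¹ else 0 := by
  rw [mP, Matrix.mul_apply]
  have hterm : ∀ u, (mA G * mE G) e u * (mA G)ᵀ u f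
      = if u = f.snd then (if e.snd = u then (deg G u)⁻¹ else 0) else 0 := by
    intro u
    rw [mE, Matrix.mul_diagonal, transpose_apply]
    simp only [mA, Matrix.of_apply]
    rcases eq_or_ne u f.snd with rfl | h
    · simp [ite_mul]
    · rw [if_neg (fun hh : f.snd = u => h hh.symm), mul_zero, if_neg h]
  rw [Finset.sum_congr rfl (fun u _ => hterm u), Finset.sum_ite_eq' univ f.snd]
  simp

lemma mU_apply (e f : G.Dart) :
    mU G e f = if f = e.symm then 2 * (deg G f.snd)⁻¹ - 1
      else if f.snd = e.fst then 2 * (deg G f.snd)⁻¹ else 0 := by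
  rw [mU, S_mul_apply]
  simp only [Matrix.sub_apply, Matrix.add_apply, P_apply, Matrix.one_apply]
  have hsnd : e.symm.snd = e.fst := rfl
  rcases eq_or_ne f e.symm with h | h
  · subst h
    rw [if_pos rfl, if_pos rfl, if_pos hsnd]
    simp only [if_true]
    ring
  · rw [if_neg h, if_neg (fun hh : e.symm = f => h hh.symm)]
    rcases eq_or_ne f.snd e.fst with h2 | h2
    · rw [if_pos h2, if_pos (hsnd.trans h2.symm)]
      ring
    · rw [if_neg h2, if_neg (fun hh : e.symm.snd = f.snd => h2 (hh.symm.trans hsnd))]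
      ring

lemma grover_eq : groverMatrix G = Complex.ofRealHom.mapMatrix (mU G) := by
  ext e f
  rw [RingHom.mapMatrix_apply, Matrix.map_apply, mU_apply]
  unfold groverMatrix
  split_ifs with h1 h2
  · simp [deg, div_eq_mul_inv]
  · simp [deg, div_eq_mul_inv]
  · simp

lemma mapMatrix_inj {n : Type*} [Fintype n] [DecidableEq n] {M N : Matrix n n ℝ}
    (h : Complex.ofRealHom.mapMatrix M = Complex.ofRealHom.mapMatrix N) : M = N := by
  ext i j
  have h2 := congrFun (congrFun h i) j
  simpa [RingHom.mapMatrix_apply, Matrix.map_apply] using h2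

lemma grover_pow_iff (k : ℕ) : groverMatrix G ^ k = 1 ↔ mU G ^ k = 1 := by
  rw [grover_eq]
  constructor
  · intro h
    apply mapMatrix_inj (N := (1 : Matrix G.Dart G.Dart ℝ))
    rw [_root_.map_pow, h, _root_.map_one]
  · intro h
    rw [← _root_.map_pow, h, _root_.map_one]

lemma dart_nonempty (hd : ∀ u : V, 0 < G.degree u) (hne : Nonempty V) : Nonempty G.Dart := by
  obtain ⟨u⟩ := hne
  obtain ⟨v, h⟩ := (G.degree_pos_iff_exists_adj u).mp (hd u)
  exact ⟨⟨(u, v), h⟩⟩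

lemma grover_ne_one (hd : ∀ u : V, 0 < G.degree u) (hne : Nonempty V) :
    groverMatrix G ≠ 1 := by
  obtain ⟨d⟩ := dart_nonempty G hd hne
  intro h
  have h2 := congrFun (congrFun h d) d
  rw [Matrix.one_apply_eq] at h2
  unfold groverMatrix at h2
  rw [if_neg (fun hh : d = d.symm => d.symm_ne hh.symm), if_neg d.snd_ne_fst] at h2
  exact zero_ne_one h2

lemma U_sq_apply (e : G.Dart) : (mU G * mU G) e e
    = (2 * (deg G e.fst)⁻¹ - 1) * (2 * (deg G e.snd)⁻¹ - 1) := by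
  rw [Matrix.mul_apply]
  rw [Finset.sum_eq_single e.symm]
  · rw [mU_apply, mU_apply]
    rw [if_pos rfl, if_pos (show e = e.symm.symm from (Dart.symm_symm e).symm)]
    rfl
  · intro f _ hf
    rw [mU_apply, mU_apply]
    rcases eq_or_ne f.snd e.fst with h2 | h2
    · rw [if_neg hf, if_pos h2]
      have h3 : ¬ (e = f.symm) := fun hh => hf (by rw [hh, Dart.symm_symm])
      have h4 : ¬ (e.snd = f.fst) := by
        intro h4
        apply hf
        exact Dart.ext _ _ (Prod.ext h4.symm h2)
      rw [if_neg h3, if_neg h4, mul_zero]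
    · rw [if_neg hf, if_neg h2, zero_mul]
  · intro h
    exact absurd (mem_univ e.symm) h

lemma exists_deg_two (hG : G.Connected) (hn : 3 ≤ Fintype.card V) : ∃ u, 2 ≤ G.degree u := by
  by_contra h
  push_neg at h
  have hd : ∀ u, 0 < G.degree u := deg_pos G hG (by omega)
  obtain ⟨u₀⟩ : Nonempty V := Fintype.card_pos_iff.mp (by omega)
  obtain ⟨a, ha⟩ := (G.degree_pos_iff_exists_adj u₀).mp (hd u₀)
  have key : ∀ z b c : V, G.Adj z b → G.Adj z c → b = c := by
    intro z b c hb hc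
    by_contra hbc
    have hsub : ({b, c} : Finset V) ⊆ G.neighborFinset z := by
      intro y hy
      rcases Finset.mem_insert.mp hy with rfl | hy
      · exact (G.mem_neighborFinset z y).mpr hb
      · rw [Finset.mem_singleton.mp hy]
        exact (G.mem_neighborFinset z c).mpr hc
    have hcard := Finset.card_le_card hsub
    rw [Finset.card_insert_of_notMem (by simpa using hbc), Finset.card_singleton,
      G.card_neighborFinset_eq_degree] at hcard
    have := h z
    omega
  have hall : ∀ (z y : V) (p : G.Walk z y), (z = u₀ ∨ z = a) → (y = u₀ ∨ y = a) := by
    intro z y p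
    induction p with
    | nil => exact id
    | cons hadj q ih =>
      rintro (rfl | rfl)
      · exact ih (Or.inr (key _ _ _ hadj ha))
      · exact ih (Or.inl (key _ _ _ hadj ha.symm))
  have hsub : (univ : Finset V) ⊆ {u₀, a} := by
    intro y _
    obtain ⟨p⟩ := hG.preconnected u₀ y
    rcases hall _ _ p (Or.inl rfl) with rfl | rfl <;> simp
  have hle := Finset.card_le_card hsub
  rw [Finset.card_univ] at hle
  have h2 : ({u₀, a} : Finset V).card ≤ 2 :=
    le_trans (Finset.card_insert_le _ _) (by simp)
  omega

lemma grover_sq_ne_one (hG : G.Connected) (hn : 3 ≤ Fintype.card V) :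
    groverMatrix G ^ 2 ≠ 1 := by
  have hd : ∀ u, 0 < G.degree u := deg_pos G hG (by omega)
  intro h
  have hU2 : mU G ^ 2 = 1 := (grover_pow_iff G 2).mp h
  obtain ⟨u, hu⟩ := exists_deg_two G hG hn
  obtain ⟨v, huv⟩ := (G.degree_pos_iff_exists_adj u).mp (hd u)
  set e : G.Dart := ⟨(u,v), huv⟩ with he
  have h1 : (mU G * mU G) e e = 1 := by
    rw [← pow_two, hU2, Matrix.one_apply_eq]
  rw [U_sq_apply] at h1
  have hfst : e.fst = u := rfl
  have hsnd : e.snd = v := rfl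
  rw [hfst, hsnd] at h1
  have hdu : (2:ℝ) ≤ deg G u := by unfold deg; exact_mod_cast hu
  have hdv : (1:ℝ) ≤ deg G v := by
    unfold deg
    exact_mod_cast hd v
  have hxpos : 0 < (deg G u)⁻¹ := inv_pos.mpr (by linarith)
  have hypos : 0 < (deg G v)⁻¹ := inv_pos.mpr (by linarith)
  have hxle : (deg G u)⁻¹ ≤ 2⁻¹ := inv_anti₀ (by norm_num) hdu
  have hyle : (deg G v)⁻¹ ≤ 1 := by
    have := inv_anti₀ (by norm_num) hdv
    simpa using this
  set A := 2 * (deg G u)⁻¹ - 1 with hA'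
  set B := 2 * (deg G v)⁻¹ - 1 with hB'
  have hA : A ≤ 0 := by rw [hA']; linarith
  have hA2 : -1 < A := by rw [hA']; linarith
  have hB : B ≤ 1 := by rw [hB']; linarith
  have hB2 : -1 < B := by rw [hB']; linarith
  rcases le_or_gt 0 B with hB0 | hB0
  · nlinarith [mul_nonneg hB0 (neg_nonneg.mpr hA)]
  · nlinarith [mul_pos (show (0:ℝ) < 1 + A by linarith) (show (0:ℝ) < -B by linarith)]

end GroverAux

open Polynomial in
/-- **Lemma 4.2.** A finite simple connected graph `G` with `n ≥ 3`
vertices induces a `4`-periodic Grover walk iff the spectrum of its transition matrix `T`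
consists of `-1` with multiplicity `1`, `0` with multiplicity `n - 2`, and `1` with
multiplicity `1`.  Since `T` is diagonalizable, this spectral condition (with
multiplicities) is expressed by its characteristic polynomial. -/
theorem four_periodic_iff_transition_charpoly {V : Type*} [Fintype V] [DecidableEq V]
    (G : SimpleGraph V) [DecidableRel G.Adj] (hG : G.Connected)
    (hn : 3 ≤ Fintype.card V) :
    InducesPeriodicGroverWalk G 4 ↔
      (transitionMatrix G).charpoly =
        (X - C (-1)) * (X - C 1) * X ^ (Fintype.card V - 2) := by
  classical
  have hd : ∀ u : V, 0 < G.degree u := GroverAux.deg_pos G hG (by omega)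
  have hne : Nonempty V := Fintype.card_pos_iff.mp (by omega)
  have hchar : (transitionMatrix G).charpoly = (GroverAux.mT G).charpoly := by
    rw [GroverAux.T_transition]
  constructor
  · rintro ⟨h4, -⟩
    rw [hchar, GroverAux.charpoly_iff_eigs G hG hn hd, ← GroverAux.trace_iff_eigs G hd,
      ← GroverAux.comm_iff_trace G hd, ← GroverAux.U4_iff_comm G hd]
    exact (GroverAux.grover_pow_iff G 4).mp h4
  · intro h
    have h4 : groverMatrix G ^ 4 = 1 := by
      apply (GroverAux.grover_pow_iff G 4).mpr
      rw [GroverAux.U4_iff_comm G hd, GroverAux.comm_iff_trace G hd,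
        GroverAux.trace_iff_eigs G hd, ← GroverAux.charpoly_iff_eigs G hG hn hd, ← hchar]
      exact h
    refine ⟨h4, ?_⟩
    intro j hj1 hj4
    interval_cases j
    · rw [pow_one]
      exact GroverAux.grover_ne_one G hd hne
    · exact GroverAux.grover_sq_ne_one G hG hn
    · intro h3
      apply GroverAux.grover_ne_one G hd hne
      have h5 : groverMatrix G ^ 4 = groverMatrix G ^ 3 * groverMatrix G := by rw [pow_succ]
      rw [h4, h3, one_mul] at h5
      exact h5.symm
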